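/- Let $(\psi_k) \subseteq X_1^*$ be a $p$-Bessel sequence for $X_1$ with bound $B_1$, $(\phi_k) \subseteq X_2$ a $q$-Bessel sequence for $X_2^*$ with bound $B_2$, and $m \in \mathbf{c}_0$. Then the multiplier $\mathbf{M}_{m,(\phi_k),(\psi_k)} : X_1 \to X_2$ is a compact operator. -/

import Mathlib

open Filter

open scoped Topology

/-- A rank-one operator `f ↦ ψ(f) • φ` is compact. -/
lemma rankOne_isCompactOperator {X₁ X₂ : Type*}
    [NormedAddCommGroup X₁] [NormedSpace ℝ X₁]
    [NormedAddCommGroup X₂] [NormedSpace ℝ X₂]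
    (ψ : StrongDual ℝ X₁) (φ : X₂) :
    IsCompactOperator (fun f : X₁ => ψ f • φ) := by
  refine ⟨(fun t : ℝ => t • φ) '' Set.Icc (-1 : ℝ) 1,
    isCompact_Icc.image (continuous_id.smul continuous_const), ?_⟩
  have h1 : ψ ⁻¹' Metric.ball (0 : ℝ) 1 ∈ 𝓝 (0 : X₁) := by
    apply ψ.continuous.continuousAt.preimage_mem_nhds
    rw [map_zero]
    exact Metric.ball_mem_nhds (0 : ℝ) one_pos
  refine Filter.mem_of_superset h1 ?_
  intro f hf
  have : |ψ f| < 1 := by simpa [Real.dist_eq] using hf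
  exact ⟨ψ f, ⟨(abs_le.1 this.le).1, (abs_le.1 this.le).2⟩, rfl⟩

lemma abs_tsum_le_tsum_abs' {ι : Type*} (a : ι → ℝ) (h : Summable fun k => |a k|) :
    |∑' k, a k| ≤ ∑' k, |a k| := by
  simpa [Real.norm_eq_abs] using norm_tsum_le_tsum_norm (f := a)
    (by simpa [Real.norm_eq_abs] using h)

set_option maxHeartbeats 1000000

/-- If `(ψ k)` is a `p`-Bessel sequence for `X₁` with bound `B₁`, `(φ k)` a `q`-Bessel
sequence for `X₂*` with bound `B₂` and `m ∈ c₀`, then the multiplier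
`M_{m,(φ k),(ψ k)} : X₁ → X₂` is a compact operator. -/
theorem multiplier_compact {X₁ X₂ : Type*}
    [NormedAddCommGroup X₁] [NormedSpace ℝ X₁] [CompleteSpace X₁]
    [TopologicalSpace.SeparableSpace X₁]
    [NormedAddCommGroup X₂] [NormedSpace ℝ X₂] [CompleteSpace X₂]
    [TopologicalSpace.SeparableSpace X₂]
    (hrefl₁ : Function.Surjective (NormedSpace.inclusionInDoubleDual ℝ X₁))
    (hrefl₂ : Function.Surjective (NormedSpace.inclusionInDoubleDual ℝ X₂))
    (p q B₁ B₂ : ℝ) (hp : 1 < p) (hpq : 1 / p + 1 / q = 1) (hB₁ : 0 < B₁) (hB₂ : 0 < B₂)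
    (ψ : ℕ → StrongDual ℝ X₁) (φ : ℕ → X₂) (m : ℕ → ℝ)
    (hbesselψ : ∀ f : X₁, ∃ s : ℝ,
      HasSum (fun k => |ψ k f| ^ p) s ∧ s ^ (1 / p) ≤ B₁ * ‖f‖)
    (hbesselφ : ∀ h : StrongDual ℝ X₂, ∃ s : ℝ,
      HasSum (fun k => |h (φ k)| ^ q) s ∧ s ^ (1 / q) ≤ B₂ * ‖h‖)
    (hm : Tendsto m atTop (nhds 0))
    (M : X₁ →L[ℝ] X₂)
    (hM : ∀ f : X₁, HasSum (fun k => (m k * ψ k f) • φ k) (M f)) :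
    IsCompactOperator (⇑M) := by
  have hcj : Real.HolderConjugate p q := Real.holderConjugate_iff.mpr ⟨hp, by rw [one_div, one_div] at hpq; exact hpq⟩
  -- the truncated (finite-rank) operators
  set T : ℕ → X₁ →L[ℝ] X₂ :=
    fun N => ∑ k ∈ Finset.range N, m k • (ψ k).smulRight (φ k) with hT
  -- each truncated operator is compact
  have hTcompact : ∀ N, IsCompactOperator (⇑(T N)) := by
    intro N
    induction N with
    | zero => simpa [hT] using (isCompactOperator_zero : IsCompactOperator (0 : X₁ → X₂))
    | succ n ih =>
      have hE : T (n + 1) = T n + m n • (ψ n).smulRight (φ n) := by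
        simp [hT, Finset.sum_range_succ]
      rw [hE]
      have h1 : IsCompactOperator (⇑((ψ n).smulRight (φ n))) := by
        exact rankOne_isCompactOperator (ψ n) (φ n)
      have h2 : IsCompactOperator (⇑(m n • (ψ n).smulRight (φ n))) := by
        rw [ContinuousLinearMap.coe_smul']
        exact h1.smul (m n)
      rw [ContinuousLinearMap.coe_add']
      exact ih.add h2
  -- key norm estimate
  have key : ∀ δ : ℝ, 0 < δ → ∀ N : ℕ, (∀ k, N ≤ k → |m k| ≤ δ) →
      ‖M - T N‖ ≤ δ * (B₁ * B₂) := by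
    intro δ hδ N hδm
    refine ContinuousLinearMap.opNorm_le_bound _ (by positivity) fun f => ?_
    have hbound : (0 : ℝ) ≤ δ * (B₁ * B₂) * ‖f‖ := by positivity
    refine NormedSpace.norm_le_dual_bound ℝ _ hbound fun h => ?_
    obtain ⟨s₁, hs₁, hs₁b⟩ := hbesselψ f
    obtain ⟨s₂, hs₂, hs₂b⟩ := hbesselφ h
    have sum_p : Summable fun k => |ψ k f| ^ p := hs₁.summable
    have sum_q : Summable fun k => |h (φ k)| ^ q := hs₂.summable
    obtain ⟨hprod_sum, hprod_le⟩ := Real.summable_and_inner_le_Lp_mul_Lq_tsum_of_nonneg hcj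
      (fun k => abs_nonneg _) (fun k => abs_nonneg _) sum_p sum_q
    have h1b : (∑' k, |ψ k f| ^ p) ^ (1 / p) ≤ B₁ * ‖f‖ := by rw [hs₁.tsum_eq]; exact hs₁b
    have h2b : (∑' k, |h (φ k)| ^ q) ^ (1 / q) ≤ B₂ * ‖h‖ := by rw [hs₂.tsum_eq]; exact hs₂b
    have hCnn : (0 : ℝ) ≤ (∑' k, |h (φ k)| ^ q) ^ (1 / q) :=
      Real.rpow_nonneg (tsum_nonneg fun k => by positivity) _
    have hC : ∑' k, |ψ k f| * |h (φ k)| ≤ (B₁ * ‖f‖) * (B₂ * ‖h‖) :=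
      hprod_le.trans (mul_le_mul h1b h2b hCnn (by positivity))
    -- the scalar coefficients
    set a : ℕ → ℝ := fun k => m k * ψ k f * h (φ k) with ha
    have habs : ∀ k, |a k| = |m k| * (|ψ k f| * |h (φ k)|) := by
      intro k; rw [ha]; simp [abs_mul, mul_assoc]
    -- bound on m
    obtain ⟨C, hCbig⟩ : ∃ C : ℝ, ∀ k, |m k| ≤ C := by
      obtain ⟨N₁, hN₁⟩ := (Metric.tendsto_atTop.1 hm) 1 one_pos
      refine ⟨max 1 ((Finset.range (N₁ + 1)).sup' (by simp) fun k => |m k|) , fun k => ?_⟩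
      rcases lt_or_ge k (N₁ + 1) with hk | hk
      · exact le_max_of_le_right (Finset.le_sup' (fun k => |m k|) (Finset.mem_range.2 hk))
      · have := hN₁ k (Nat.le_of_succ_le hk)
        rw [Real.dist_eq, sub_zero] at this
        exact le_max_of_le_left this.le
    have summable_a : Summable a := by
      refine Summable.of_norm_bounded (g := fun k => C * (|ψ k f| * |h (φ k)|))
        (hprod_sum.mul_left C) fun k => ?_
      rw [Real.norm_eq_abs, habs]
      exact mul_le_mul_of_nonneg_right (hCbig k) (by positivity)
    -- the dual pairing of the remainder
    have hMf : HasSum a (h (M f)) := by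
      have := (hM f).mapL h
      simpa [ha, map_smul, smul_eq_mul] using this
    have hTNf : h (T N f) = ∑ k ∈ Finset.range N, a k := by
      simp [hT, ha, smul_eq_mul, mul_assoc]
    set S : Set ℕ := (↑(Finset.range N) : Set ℕ)ᶜ with hS
    have hsplit := Summable.sum_add_tsum_compl (s := Finset.range N) summable_a
    have hrem : h ((M - T N) f) = ∑' k : S, a k := by
      have h0 : h ((M - T N) f) = h (M f) - h (T N f) := by simp
      rw [h0, ← hMf.tsum_eq, hTNf, ← hsplit]
      ring
    have hsum_sub : Summable fun k : S => a k := summable_a.subtype _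
    have hsum_sub_abs : Summable fun k : S => |a k| := summable_a.abs.subtype _
    have hsum_sub_g : Summable fun k : S => δ * (|ψ k.1 f| * |h (φ k.1)|) :=
      (hprod_sum.mul_left δ).subtype _
    have step1 : ‖h ((M - T N) f)‖ ≤ ∑' k : S, |a k| := by
      rw [hrem, Real.norm_eq_abs]
      exact abs_tsum_le_tsum_abs' _ hsum_sub_abs
    have step2 : ∑' k : S, |a k| ≤ ∑' k : S, δ * (|ψ k.1 f| * |h (φ k.1)|) := by
      refine Summable.tsum_le_tsum (fun k => ?_) hsum_sub_abs hsum_sub_g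
      have hk : N ≤ (k : ℕ) := by
        have := k.2
        simp only [hS, Set.mem_compl_iff, Finset.coe_range, Set.mem_Iio, not_lt] at this
        exact this
      rw [habs]
      exact mul_le_mul_of_nonneg_right (hδm k hk) (by positivity)
    have step3 : ∑' k : S, δ * (|ψ k.1 f| * |h (φ k.1)|)
        ≤ δ * ∑' k, |ψ k f| * |h (φ k)| := by
      rw [tsum_mul_left]
      refine mul_le_mul_of_nonneg_left ?_ hδ.le
      exact Summable.tsum_le_tsum_of_inj (Subtype.val) Subtype.val_injective
        (fun c _ => by positivity) (fun k => le_refl _) (hprod_sum.subtype _) hprod_sum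
    calc ‖h ((M - T N) f)‖ ≤ δ * ∑' k, |ψ k f| * |h (φ k)| :=
          step1.trans (step2.trans step3)
      _ ≤ δ * ((B₁ * ‖f‖) * (B₂ * ‖h‖)) := mul_le_mul_of_nonneg_left hC hδ.le
      _ = δ * (B₁ * B₂) * ‖f‖ * ‖h‖ := by ring
  -- convergence of T to M in operator norm
  have htends : Tendsto T atTop (𝓝 M) := by
    rw [Metric.tendsto_atTop]
    intro ε hε
    have hδ : 0 < ε / (B₁ * B₂ + 1) := by positivity
    obtain ⟨N₀, hN₀⟩ := (Metric.tendsto_atTop.1 hm) (ε / (B₁ * B₂ + 1)) hδ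
    refine ⟨N₀, fun N hN => ?_⟩
    have hbd : ∀ k, N ≤ k → |m k| ≤ ε / (B₁ * B₂ + 1) := by
      intro k hk
      have := hN₀ k (le_trans hN hk)
      rw [Real.dist_eq, sub_zero] at this
      exact this.le
    have := key _ hδ N hbd
    rw [dist_eq_norm, ← norm_neg, neg_sub]
    calc ‖M - T N‖ ≤ ε / (B₁ * B₂ + 1) * (B₁ * B₂) := this
      _ < ε / (B₁ * B₂ + 1) * (B₁ * B₂ + 1) := by
          exact mul_lt_mul_of_pos_left (lt_add_one _) hδ
      _ = ε := by field_simp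
  exact isCompactOperator_of_tendsto htends (Eventually.of_forall hTcompact)
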